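/- Fix integers k ≥ 3 and n with k | n, and for 1 ≤ i ≤ n/2 with i ≡ j (mod k), 1 ≤ j ≤ k−1, define f_i = (4/k)·i·(n−i) + ((2k−2)/k)·n and c_i = (4/k)·i·(n−i) + (2/k)·((k−j)·n + (2j−k)·i). Then f_i/c_i = 1 + ((j−1)·n − (2j−k)·i) / (2·i·(n−i) + (k−j)·n + (2j−k)·i), and for all such i (using i ≥ j), f_i/c_i ≤ 1 + (k−2)/(2k−1) + C/n = (3k−3)/(2k−1) + C/n for some constant C depending only on k. If instead i ≡ 0 (mod k), then f_i = c_i = (4/k)·i·(n−i), so f_i/c_i = 1. -/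

import Mathlib

set_option maxHeartbeats 1600000 in
/-- with `f_i = (4/k)i(n−i) + ((2k−2)/k)n` and
`c_i = (4/k)i(n−i) + (2/k)((k−j)n + (2j−k)i)` for `1 ≤ i ≤ n/2`, `i ≡ j (mod k)`,
`1 ≤ j ≤ k−1`, one has the exact ratio formula
`f_i/c_i = 1 + ((j−1)n − (2j−k)i)/(2i(n−i) + (k−j)n + (2j−k)i)`, and there is a
constant `C` (depending only on `k`) with `f_i/c_i ≤ (3k−3)/(2k−1) + C/n` for all
such `n, i, j` (with `n ≥ 8k²` and `k ∣ n`); moreover if `i ≡ 0 (mod k)` then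
`f_i = c_i = (4/k)i(n−i)`, so `f_i/c_i = 1`. -/
theorem stmt_17 (k : ℕ) (hk : 3 ≤ k) :
    (∃ C : ℝ, ∀ n i j : ℕ, 8 * k ^ 2 ≤ n → k ∣ n → 1 ≤ i → 2 * i ≤ n →
      i % k = j → 1 ≤ j → j ≤ k - 1 →
      ((4 / (k : ℝ)) * i * ((n : ℝ) - i) + ((2 * (k : ℝ) - 2) / (k : ℝ)) * n) /
          ((4 / (k : ℝ)) * i * ((n : ℝ) - i)
            + (2 / (k : ℝ)) * (((k : ℝ) - j) * n + (2 * (j : ℝ) - k) * i))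
        = 1 + (((j : ℝ) - 1) * n - (2 * (j : ℝ) - k) * i) /
            (2 * (i : ℝ) * ((n : ℝ) - i) + ((k : ℝ) - j) * n + (2 * (j : ℝ) - k) * i) ∧
      ((4 / (k : ℝ)) * i * ((n : ℝ) - i) + ((2 * (k : ℝ) - 2) / (k : ℝ)) * n) /
          ((4 / (k : ℝ)) * i * ((n : ℝ) - i)
            + (2 / (k : ℝ)) * (((k : ℝ) - j) * n + (2 * (j : ℝ) - k) * i))
        ≤ (3 * (k : ℝ) - 3) / (2 * (k : ℝ) - 1) + C / n) ∧
    (∀ n i : ℕ, 8 * k ^ 2 ≤ n → k ∣ n → 1 ≤ i → 2 * i ≤ n → i % k = 0 →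
      ((4 / (k : ℝ)) * i * ((n : ℝ) - i)) / ((4 / (k : ℝ)) * i * ((n : ℝ) - i)) = 1) := by
  have hK3 : (3:ℝ) ≤ (k:ℝ) := by exact_mod_cast hk
  have hK0 : (0:ℝ) < (k:ℝ) := by linarith
  constructor
  · refine ⟨10 * (k:ℝ)^2, ?_⟩
    intro n i j hn hdvd hi hin hmod hj hjk
    have hji : j ≤ i := hmod ▸ Nat.mod_le i k
    have hjk' : j < k := hmod ▸ Nat.mod_lt i (by omega)
    have hI1 : (1:ℝ) ≤ (i:ℝ) := by exact_mod_cast hi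
    have hJ1 : (1:ℝ) ≤ (j:ℝ) := by exact_mod_cast hj
    have hJI : (j:ℝ) ≤ (i:ℝ) := by exact_mod_cast hji
    have hJK : (j:ℝ) + 1 ≤ (k:ℝ) := by exact_mod_cast hjk'
    have h2I : 2*(i:ℝ) ≤ (n:ℝ) := by exact_mod_cast hin
    have hNbig : 8*(k:ℝ)^2 ≤ (n:ℝ) := by exact_mod_cast hn
    have hNr0 : (0:ℝ) < (n:ℝ) := by nlinarith
    have hDlb : (i:ℝ) * (n:ℝ) / 2
        ≤ 2 * (i:ℝ) * ((n:ℝ) - i) + ((k:ℝ) - j) * n + (2 * (j:ℝ) - k) * i := by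
      nlinarith [mul_nonneg (by linarith : (0:ℝ) ≤ (n:ℝ) - 2*i) (by linarith : (0:ℝ) ≤ (i:ℝ)),
        mul_nonneg (by nlinarith : (0:ℝ) ≤ (n:ℝ) - 2*k) (by linarith : (0:ℝ) ≤ (i:ℝ)),
        mul_nonneg (by linarith : (0:ℝ) ≤ (j:ℝ) - 1) (by linarith : (0:ℝ) ≤ (i:ℝ))]
    have hD0 : (0:ℝ) < 2 * (i:ℝ) * ((n:ℝ) - i) + ((k:ℝ) - j) * n + (2 * (j:ℝ) - k) * i := by
      nlinarith
    have hE : (2*(k:ℝ) - 1) * (((j:ℝ) - 1) * n - (2 * (j:ℝ) - k) * i)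
        - ((k:ℝ) - 2) * (2 * (i:ℝ) * ((n:ℝ) - i) + ((k:ℝ) - j) * n + (2 * (j:ℝ) - k) * i)
        ≤ 5 * (k:ℝ)^2 * i := by
      rcases Nat.lt_or_ge i k with hik | hik
      · have : i = j := by rw [← hmod, Nat.mod_eq_of_lt hik]
        have hIJ : (i:ℝ) = (j:ℝ) := by exact_mod_cast this
        rw [hIJ]
        nlinarith [mul_nonneg (mul_nonneg (by linarith : (0:ℝ) ≤ (k:ℝ) - 1 - j)
            (by linarith : (0:ℝ) ≤ (k:ℝ) + 1)) (le_of_lt hNr0),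
          mul_nonneg (by linarith : (0:ℝ) ≤ (k:ℝ) - 1 - j) (by linarith : (0:ℝ) ≤ (j:ℝ)),
          mul_nonneg (by linarith : (0:ℝ) ≤ (j:ℝ) - 1) (by linarith : (0:ℝ) ≤ (k:ℝ)),
          mul_nonneg (mul_nonneg (by linarith : (0:ℝ) ≤ (k:ℝ) - 1 - j)
            (by linarith : (0:ℝ) ≤ (j:ℝ))) (by linarith : (0:ℝ) ≤ (k:ℝ)),
          mul_nonneg (mul_nonneg (by linarith : (0:ℝ) ≤ (j:ℝ) - 1)
            (by linarith : (0:ℝ) ≤ (j:ℝ))) (by linarith : (0:ℝ) ≤ (k:ℝ))]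
      · have hq : 1 ≤ i / k := (Nat.one_le_div_iff (by omega)).2 hik
        have hikj : k + j ≤ i := by
          have h1 := Nat.div_add_mod i k
          rw [hmod] at h1
          have h2 : k * 1 ≤ k * (i / k) := Nat.mul_le_mul_left k hq
          omega
        have hKJI : (k:ℝ) + (j:ℝ) ≤ (i:ℝ) := by exact_mod_cast hikj
        nlinarith [mul_nonneg (mul_nonneg (by linarith : (0:ℝ) ≤ (n:ℝ) - 2*i)
            (by linarith : (0:ℝ) ≤ (k:ℝ) - 2)) (by linarith : (0:ℝ) ≤ (i:ℝ)),
          mul_nonneg (mul_nonneg (by linarith : (0:ℝ) ≤ (i:ℝ) - k - j)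
            (by linarith : (0:ℝ) ≤ (k:ℝ) - 2)) (le_of_lt hNr0),
          mul_nonneg (mul_nonneg (by linarith : (0:ℝ) ≤ (k:ℝ) - 1 - j)
            (by linarith : (0:ℝ) ≤ 2*(k:ℝ) - 1)) (le_of_lt hNr0),
          mul_nonneg (mul_nonneg (by linarith : (0:ℝ) ≤ (j:ℝ) - 1)
            (by linarith : (0:ℝ) ≤ (k:ℝ))) (by linarith : (0:ℝ) ≤ (i:ℝ)),
          mul_nonneg (by linarith : (0:ℝ) ≤ (k:ℝ) - 1 - j) (by linarith : (0:ℝ) ≤ (i:ℝ)),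
          mul_pos hNr0 (by linarith : (0:ℝ) < (i:ℝ))]
    have hcne : (4 / (k:ℝ)) * i * ((n:ℝ) - i)
        + (2 / (k:ℝ)) * (((k:ℝ) - j) * n + (2 * (j:ℝ) - k) * i) ≠ 0 := by
      have hrw : (4 / (k:ℝ)) * i * ((n:ℝ) - i)
          + (2 / (k:ℝ)) * (((k:ℝ) - j) * n + (2 * (j:ℝ) - k) * i)
          = (2 / (k:ℝ)) * (2 * (i:ℝ) * ((n:ℝ) - i) + ((k:ℝ) - j) * n + (2 * (j:ℝ) - k) * i) := by
        field_simp; ring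
      rw [hrw]
      positivity
    have heq : ((4 / (k:ℝ)) * i * ((n:ℝ) - i) + ((2 * (k:ℝ) - 2) / (k:ℝ)) * n) /
          ((4 / (k:ℝ)) * i * ((n:ℝ) - i)
            + (2 / (k:ℝ)) * (((k:ℝ) - j) * n + (2 * (j:ℝ) - k) * i))
        = 1 + (((j:ℝ) - 1) * n - (2 * (j:ℝ) - k) * i) /
            (2 * (i:ℝ) * ((n:ℝ) - i) + ((k:ℝ) - j) * n + (2 * (j:ℝ) - k) * i) := by
      rw [div_eq_iff hcne, one_add_div hD0.ne',
        div_mul_eq_mul_div _ (2 * (i:ℝ) * ((n:ℝ) - i) + ((k:ℝ) - j) * n + (2 * (j:ℝ) - k) * i),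
        eq_div_iff hD0.ne']
      field_simp
      ring
    refine ⟨heq, ?_⟩
    rw [heq]
    have h2K1 : (0:ℝ) < 2*(k:ℝ) - 1 := by linarith
    have hsplit : (3 * (k:ℝ) - 3) / (2 * (k:ℝ) - 1) = 1 + ((k:ℝ) - 2) / (2 * (k:ℝ) - 1) := by
      rw [one_add_div h2K1.ne']; ring
    rw [hsplit]
    have hcomb : ((k:ℝ) - 2) / (2 * (k:ℝ) - 1) + 10 * (k:ℝ)^2 / n
        = (((k:ℝ) - 2) * n + 10 * (k:ℝ)^2 * (2 * (k:ℝ) - 1)) / ((2 * (k:ℝ) - 1) * n) := by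
      rw [div_add_div _ _ h2K1.ne' hNr0.ne']; ring
    have key : (((j:ℝ) - 1) * n - (2 * (j:ℝ) - k) * i) /
        (2 * (i:ℝ) * ((n:ℝ) - i) + ((k:ℝ) - j) * n + (2 * (j:ℝ) - k) * i)
        ≤ ((k:ℝ) - 2) / (2 * (k:ℝ) - 1) + 10 * (k:ℝ)^2 / n := by
      rw [hcomb, div_le_div_iff₀ hD0 (by positivity)]
      nlinarith [mul_le_mul_of_nonneg_right hE (le_of_lt hNr0),
        mul_le_mul_of_nonneg_left hDlb (by positivity : (0:ℝ) ≤ 10 * (k:ℝ)^2),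
        mul_nonneg (mul_nonneg (by positivity : (0:ℝ) ≤ (k:ℝ)^2)
          (by linarith : (0:ℝ) ≤ 2*(k:ℝ) - 2)) (le_of_lt hD0)]
    linarith
  · intro n i hn hdvd hi hin hmod
    have hI1 : (1:ℝ) ≤ (i:ℝ) := by exact_mod_cast hi
    have h2I : 2*(i:ℝ) ≤ (n:ℝ) := by exact_mod_cast hin
    have hNbig : 8*(k:ℝ)^2 ≤ (n:ℝ) := by exact_mod_cast hn
    have h2 : (0:ℝ) < (n:ℝ) - i := by nlinarith
    have h3 : (0:ℝ) < (i:ℝ) := by linarith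
    have hpos : (0:ℝ) < (4 / (k:ℝ)) * i * ((n:ℝ) - i) := by positivity
    exact div_self (ne_of_gt hpos)
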